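/- arXiv:1605.07025 — 2 statements merged into one kernel-verified Lean document; each statement's English description precedes it below -/
import Mathlib

section
/- (Feature hashing is unbiased) Let φ(x), φ(x') ∈ R^n be fixed vectors. Let h : {1,…,n} → {1,…,m} and ξ : {1,…,n} → {±1} be independent uniformly random hash functions (all values independent and uniform). Define φ̄_j(x) = Σ_{i : h(i)=j} ξ(i) φ_i(x). Then E[φ̄(x)^T φ̄(x')] = φ(x)^T φ(x'). -/
open MeasureTheory ProbabilityTheory Finset

/-- feature hashing is unbiased: Let `a = φ(x), b = φ(x') ∈ ℝ^n` be fixed. Let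
`h : {1,…,n} → {1,…,m}` and `ξ : {1,…,n} → {±1}` be independent uniformly random hash
functions (all values independent and uniform). With `φ̄_j(x) = ∑_{i : h i = j} ξ i * a i`,
`E[φ̄(x)ᵀ φ̄(x')] = φ(x)ᵀ φ(x') = ∑ i, a i * b i`. -/
theorem feature_hashing_unbiased
    {Ω : Type*} [MeasurableSpace Ω] (μ : Measure Ω) [IsProbabilityMeasure μ]
    (n m : ℕ) (hm : 0 < m) (a b : Fin n → ℝ)
    (h : Fin n → Ω → Fin m) (ξ : Fin n → Ω → ℝ)
    (hhm : ∀ i, Measurable (h i)) (hξm : ∀ i, Measurable (ξ i))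
    (hunif : ∀ i (j : Fin m), μ (h i ⁻¹' {j}) = (m : ENNReal)⁻¹)
    (hsign : ∀ i, μ (ξ i ⁻¹' {1}) = 2⁻¹ ∧ μ (ξ i ⁻¹' {-1}) = 2⁻¹)
    (hindep : iIndepFun
      (β := fun k : Fin n ⊕ Fin n => Sum.elim (fun _ => Fin m) (fun _ => ℝ) k)
      (m := fun k => Sum.rec (fun _ => (inferInstance : MeasurableSpace (Fin m)))
        (fun _ => (inferInstance : MeasurableSpace ℝ)) k)
      (fun k => Sum.rec (fun i => h i) (fun i => ξ i) k) μ) :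
    (∫ ω, ∑ j : Fin m,
        (∑ i, if h i ω = j then ξ i ω * a i else 0) *
          (∑ i, if h i ω = j then ξ i ω * b i else 0) ∂μ) =
      ∑ i, a i * b i := by
  classical
  set F : Fin n → Fin n → Ω → ℝ := fun i k ω =>
    if h k ω = h i ω then (ξ i ω * a i) * (ξ k ω * b k) else 0 with hF
  -- pointwise rewriting of the integrand
  have hpt : ∀ ω, (∑ j : Fin m,
        (∑ i, if h i ω = j then ξ i ω * a i else 0) *
          (∑ i, if h i ω = j then ξ i ω * b i else 0))
      = ∑ i, ∑ k, F i k ω := by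
    intro ω
    have step : (∑ j : Fin m,
        (∑ i, if h i ω = j then ξ i ω * a i else 0) *
          (∑ i, if h i ω = j then ξ i ω * b i else 0))
        = ∑ i, ∑ k, (if h k ω = h i ω then ξ k ω * a k * (ξ i ω * b i) else 0) := by
      simp only [Finset.sum_mul, Finset.mul_sum]
      rw [Finset.sum_comm]
      refine Finset.sum_congr rfl fun i _ => ?_
      rw [Finset.sum_comm]
      refine Finset.sum_congr rfl fun k _ => ?_
      simp only [ite_mul, mul_ite, zero_mul, mul_zero, Finset.sum_ite_eq, Finset.mem_univ,
        if_true]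
    rw [step, Finset.sum_comm]
    exact Finset.sum_congr rfl fun i _ => Finset.sum_congr rfl fun k _ =>
      if_congr eq_comm rfl rfl
  -- ξ i = ±1 almost everywhere
  have hpm : ∀ i, ∀ᵐ ω ∂μ, ξ i ω = 1 ∨ ξ i ω = -1 := by
    intro i
    have hA : MeasurableSet (ξ i ⁻¹' {1}) := (hξm i) (measurableSet_singleton 1)
    have hB : MeasurableSet (ξ i ⁻¹' {-1}) := (hξm i) (measurableSet_singleton (-1))
    have hd : Disjoint (ξ i ⁻¹' {1}) (ξ i ⁻¹' {-1}) := by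
      refine Set.disjoint_left.2 fun ω h1 h2 => ?_
      simp only [Set.mem_preimage, Set.mem_singleton_iff] at h1 h2
      rw [h1] at h2; norm_num at h2
    have hu : μ (ξ i ⁻¹' {1} ∪ ξ i ⁻¹' {-1}) = 1 := by
      rw [measure_union hd hB, (hsign i).1, (hsign i).2]
      rw [ENNReal.inv_two_add_inv_two]
    have hcompl : μ (ξ i ⁻¹' {1} ∪ ξ i ⁻¹' {-1})ᶜ = 0 := by
      rw [measure_compl (hA.union hB) (measure_ne_top _ _), hu, measure_univ, tsub_self]
    rw [ae_iff]
    have hset : {ω | ¬(ξ i ω = 1 ∨ ξ i ω = -1)} = (ξ i ⁻¹' {1} ∪ ξ i ⁻¹' {-1})ᶜ := by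
      ext ω
      simp [Set.mem_preimage, not_or]
    rw [hset]
    exact hcompl
  -- expectation of ξ i is zero
  have hEξ : ∀ i, (∫ ω, ξ i ω ∂μ) = 0 := by
    intro i
    have hA : MeasurableSet (ξ i ⁻¹' {1}) := (hξm i) (measurableSet_singleton 1)
    have hB : MeasurableSet (ξ i ⁻¹' {-1}) := (hξm i) (measurableSet_singleton (-1))
    have hg : (fun ω => ξ i ω) =ᵐ[μ]
        (fun ω => (ξ i ⁻¹' {1}).indicator (fun _ => (1:ℝ)) ω
          + (ξ i ⁻¹' {-1}).indicator (fun _ => (-1:ℝ)) ω) := by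
      filter_upwards [hpm i] with ω hω
      rcases hω with h1 | h1 <;>
        simp [Set.indicator_apply, Set.mem_preimage, h1] <;> norm_num
    rw [integral_congr_ae hg, integral_add ((integrable_const (1:ℝ)).indicator hA)
      ((integrable_const (-1:ℝ)).indicator hB), integral_indicator_const _ hA,
      integral_indicator_const _ hB, measureReal_def, measureReal_def, (hsign i).1, (hsign i).2]
    norm_num
  -- measurability and integrability of the terms
  have hFmeas : ∀ i k, Measurable (F i k) := by
    intro i k
    refine Measurable.ite (measurableSet_eq_fun (hhm k) (hhm i)) ?_ measurable_const
    exact (((hξm i).mul measurable_const).mul ((hξm k).mul measurable_const))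
  have hFint : ∀ i k, Integrable (F i k) μ := by
    intro i k
    refine Integrable.mono' (integrable_const (|a i| * |b k|))
      (hFmeas i k).aestronglyMeasurable ?_
    filter_upwards [hpm i, hpm k] with ω h1 h2
    simp only [hF]
    split
    · have e1 : |ξ i ω| = 1 := by rcases h1 with h1 | h1 <;> simp [h1]
      have e2 : |ξ k ω| = 1 := by rcases h2 with h2 | h2 <;> simp [h2]
      rw [Real.norm_eq_abs, abs_mul, abs_mul, abs_mul, e1, e2, one_mul, one_mul]
    · simpa using mul_nonneg (abs_nonneg (a i)) (abs_nonneg (b k))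
  -- diagonal terms
  have hdiag : ∀ i, (∫ ω, F i i ω ∂μ) = a i * b i := by
    intro i
    have : F i i =ᵐ[μ] fun _ => a i * b i := by
      filter_upwards [hpm i] with ω hω
      simp only [hF, if_pos rfl]
      rcases hω with h1 | h1 <;> rw [h1] <;> ring
    rw [integral_congr_ae this, integral_const, probReal_univ, one_smul]
  -- off-diagonal terms vanish
  have hoff : ∀ i k, i ≠ k → (∫ ω, F i k ω ∂μ) = 0 := by
    intro i k hik
    letI : ∀ x : Fin n ⊕ Fin n, MeasurableSpace (Sum.elim (fun _ => Fin m) (fun _ => ℝ) x) :=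
      fun x => Sum.rec (fun _ => (inferInstance : MeasurableSpace (Fin m)))
        (fun _ => (inferInstance : MeasurableSpace ℝ)) x
    set f : ∀ x : Fin n ⊕ Fin n, Ω → Sum.elim (fun _ => Fin m) (fun _ => ℝ) x :=
      fun x => Sum.rec (fun i => h i) (fun i => ξ i) x with hf
    have hfm : ∀ x, Measurable (f x) := by
      intro x; cases x with
      | inl i => exact hhm i
      | inr i => exact hξm i
    set S : Finset (Fin n ⊕ Fin n) := {Sum.inr i} with hS
    set T : Finset (Fin n ⊕ Fin n) := {Sum.inl i, Sum.inl k, Sum.inr k} with hT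
    have hST : Disjoint S T := by
      simp only [hS, hT, Finset.disjoint_left, Finset.mem_singleton, Finset.mem_insert]
      rintro x rfl
      simp [hik]
    have base := hindep.indepFun_finset S T hST hfm
    have miS : Sum.inr i ∈ S := by simp [hS]
    have m1 : Sum.inl i ∈ T := by simp [hT]
    have m2 : Sum.inl k ∈ T := by simp [hT]
    have m3 : Sum.inr k ∈ T := by simp [hT]
    set g₁ : (∀ x : S, Sum.elim (fun _ => Fin m) (fun _ => ℝ) (x : Fin n ⊕ Fin n)) → ℝ :=
      fun v => v ⟨Sum.inr i, miS⟩ with hg₁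
    set g₂ : (∀ x : T, Sum.elim (fun _ => Fin m) (fun _ => ℝ) (x : Fin n ⊕ Fin n)) → ℝ :=
      fun v => (if (show Fin m from v ⟨Sum.inl k, m2⟩) = (show Fin m from v ⟨Sum.inl i, m1⟩)
          then (1:ℝ) else 0)
        * (show ℝ from v ⟨Sum.inr k, m3⟩) with hg₂
    have hg₁m : Measurable g₁ := measurable_pi_apply _
    have hg₂m : Measurable g₂ := by
      refine Measurable.mul ?_ (measurable_pi_apply _)
      refine Measurable.ite (measurableSet_eq_fun (measurable_pi_apply _)
        (measurable_pi_apply _)) measurable_const measurable_const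
    have hind : IndepFun (fun ω => ξ i ω)
        (fun ω => (if h k ω = h i ω then (1:ℝ) else 0) * ξ k ω) μ := by
      have h0 := base.comp hg₁m hg₂m
      have e₁ : (g₁ ∘ fun a (x : S) => f x a) = fun ω => ξ i ω := by funext ω; rfl
      have e₂ : (g₂ ∘ fun a (x : T) => f x a)
          = fun ω => (if h k ω = h i ω then (1:ℝ) else 0) * ξ k ω := by funext ω; rfl
      rwa [e₁, e₂] at h0
    have hint := hind.integral_mul_eq_mul_integral (hξm i).aestronglyMeasurable
      (by
        refine Measurable.aestronglyMeasurable ?_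
        exact (Measurable.ite (measurableSet_eq_fun (hhm k) (hhm i))
          measurable_const measurable_const).mul (hξm k))
    have hre : ∀ ω, F i k ω = (a i * b k) *
        ((fun ω => ξ i ω) * fun ω => (if h k ω = h i ω then (1:ℝ) else 0) * ξ k ω) ω := by
      intro ω
      simp only [hF, Pi.mul_apply]
      split <;> ring
    calc (∫ ω, F i k ω ∂μ)
        = ∫ ω, (a i * b k) *
            ((fun ω => ξ i ω) * fun ω => (if h k ω = h i ω then (1:ℝ) else 0) * ξ k ω) ω ∂μ := by
          exact integral_congr_ae (Filter.Eventually.of_forall hre)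
      _ = (a i * b k) * ∫ ω,
            ((fun ω => ξ i ω) * fun ω => (if h k ω = h i ω then (1:ℝ) else 0) * ξ k ω) ω ∂μ :=
          integral_const_mul _ _
      _ = 0 := by rw [show (∫ ω, ((fun ω => ξ i ω) *
              fun ω => (if h k ω = h i ω then (1:ℝ) else 0) * ξ k ω) ω ∂μ) = _ from hint,
            hEξ i, zero_mul, mul_zero]
  -- assemble
  calc (∫ ω, ∑ j : Fin m,
        (∑ i, if h i ω = j then ξ i ω * a i else 0) *
          (∑ i, if h i ω = j then ξ i ω * b i else 0) ∂μ)
      = ∫ ω, ∑ i, ∑ k, F i k ω ∂μ := by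
        exact integral_congr_ae (Filter.Eventually.of_forall hpt)
    _ = ∑ i, ∑ k, ∫ ω, F i k ω ∂μ := by
        rw [integral_finset_sum _ fun i _ => integrable_finset_sum _ fun k _ => hFint i k]
        exact Finset.sum_congr rfl fun i _ => integral_finset_sum _ fun k _ => hFint i k
    _ = ∑ i, a i * b i := by
        refine Finset.sum_congr rfl fun i _ => ?_
        rw [Finset.sum_eq_single i (fun k _ hk => hoff i k (Ne.symm hk)) (by simp), hdiag i]
end

section
/- (Feature hashing variance bound) In the setting above, Var[φ̄(x)^T φ̄(x')] ≤ C/m for a constant C depending only on the norms of φ(x) and φ(x') (i.e., Var = O(1/m)). -/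
open MeasureTheory ProbabilityTheory Finset
universe u

instance sumElimMS (n m : ℕ) (k : Fin n ⊕ Fin n) :
    MeasurableSpace (Sum.elim (fun _ => Fin m) (fun _ => ℝ) k) :=
  Sum.rec (fun _ => (inferInstance : MeasurableSpace (Fin m)))
    (fun _ => (inferInstance : MeasurableSpace ℝ)) k

section Aux
set_option linter.unusedSectionVars false
variable {Ω : Type u} [MeasurableSpace Ω] {μ : Measure Ω} [IsProbabilityMeasure μ]
  {n m : ℕ} {h : Fin n → Ω → Fin m} {ξ : Fin n → Ω → ℝ}

lemma ae_sign' (hmξ : ∀ i, Measurable (ξ i))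
    (hξ : ∀ i, μ (ξ i ⁻¹' {1}) = 2⁻¹ ∧ μ (ξ i ⁻¹' {-1}) = 2⁻¹) (i : Fin n) :
    ∀ᵐ ω ∂μ, ξ i ω = 1 ∨ ξ i ω = -1 := by
  have hA : MeasurableSet (ξ i ⁻¹' {1}) := (hmξ i) (measurableSet_singleton _)
  have hB : MeasurableSet (ξ i ⁻¹' {-1}) := (hmξ i) (measurableSet_singleton _)
  have hd : Disjoint (ξ i ⁻¹' {1}) (ξ i ⁻¹' {-1}) := by
    apply Set.disjoint_left.mpr
    intro ω h1 h2
    simp only [Set.mem_preimage, Set.mem_singleton_iff] at h1 h2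
    rw [h1] at h2; norm_num at h2
  have hu : μ (ξ i ⁻¹' {1} ∪ ξ i ⁻¹' {-1}) = 1 := by
    rw [measure_union hd hB, (hξ i).1, (hξ i).2]
    rw [← ENNReal.inv_two_add_inv_two]
  have : μ (ξ i ⁻¹' {1} ∪ ξ i ⁻¹' {-1})ᶜ = 0 := by
    rw [measure_compl (hA.union hB) (by simp), hu, measure_univ, tsub_self]
  filter_upwards [measure_eq_zero_iff_ae_notMem.mp this] with ω hω
  simp only [Set.compl_union, Set.mem_inter_iff, Set.mem_compl_iff, Set.mem_preimage,
    Set.mem_singleton_iff] at hω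
  tauto

lemma int_of_bdd' {g : Ω → ℝ} (hg : Measurable g) {C : ℝ} (hb : ∀ᵐ ω ∂μ, |g ω| ≤ C) :
    Integrable g μ :=
  memLp_one_iff_integrable.mp (MemLp.of_bound hg.aestronglyMeasurable C
    (by filter_upwards [hb] with ω hω; simpa using hω))

lemma xi_mean_zero' (hmξ : ∀ i, Measurable (ξ i))
    (hξ : ∀ i, μ (ξ i ⁻¹' {1}) = 2⁻¹ ∧ μ (ξ i ⁻¹' {-1}) = 2⁻¹) (i : Fin n) :
    ∫ ω, ξ i ω ∂μ = 0 := by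
  have hA : MeasurableSet (ξ i ⁻¹' {1}) := (hmξ i) (measurableSet_singleton _)
  have hB : MeasurableSet (ξ i ⁻¹' {-1}) := (hmξ i) (measurableSet_singleton _)
  have hae : ξ i =ᵐ[μ] fun ω => (ξ i ⁻¹' {1}).indicator (fun _ => (1:ℝ)) ω
      - (ξ i ⁻¹' {-1}).indicator (fun _ => (1:ℝ)) ω := by
    filter_upwards [ae_sign' hmξ hξ i] with ω hω
    rcases hω with h1 | h1 <;>
      norm_num [Set.indicator_apply, Set.mem_preimage, h1]
  rw [integral_congr_ae hae, integral_sub ((integrable_const (1:ℝ)).indicator hA)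
    ((integrable_const (1:ℝ)).indicator hB)]
  rw [integral_indicator_const (1:ℝ) hA, integral_indicator_const (1:ℝ) hB,
    measureReal_def, measureReal_def, (hξ i).1, (hξ i).2]
  simp

lemma key_indep (hmh : ∀ i, Measurable (h i)) (hmξ : ∀ i, Measurable (ξ i))
    (hindep : iIndepFun
        (β := fun k : Fin n ⊕ Fin n => Sum.elim (fun _ => Fin m) (fun _ => ℝ) k)
        (m := fun k => Sum.rec (fun _ => (inferInstance : MeasurableSpace (Fin m)))
          (fun _ => (inferInstance : MeasurableSpace ℝ)) k)
        (fun k => Sum.rec (fun i => h i) (fun i => ξ i) k) μ)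
    (T : Finset (Fin n ⊕ Fin n)) (l : Fin n) (hl : Sum.inr l ∉ T)
    (G : ((s : T) → Sum.elim (fun _ => Fin m) (fun _ => ℝ) (s : Fin n ⊕ Fin n)) → ℝ)
    (hG : Measurable G) :
    IndepFun (fun ω => G (fun s =>
      Sum.rec (motive := fun k => Ω → Sum.elim (fun _ => Fin m) (fun _ => ℝ) k)
        (fun i => h i) (fun i => ξ i) (s : Fin n ⊕ Fin n) ω)) (ξ l) μ := by
  have hmeas : ∀ k : Fin n ⊕ Fin n, Measurable
      (Sum.rec (motive := fun k => Ω → Sum.elim (fun _ => Fin m) (fun _ => ℝ) k)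
        (fun i => h i) (fun i => ξ i) k) := by
    intro k
    cases k with
    | inl i => exact hmh i
    | inr i => exact hmξ i
  have hbase := hindep.indepFun_finset T {Sum.inr l}
    (Finset.disjoint_singleton_right.mpr hl) hmeas
  have := hbase.comp hG (measurable_pi_apply (⟨Sum.inr l, Finset.mem_singleton_self _⟩ :
    ({Sum.inr l} : Finset (Fin n ⊕ Fin n))))
  exact this

lemma intZ (hmh : ∀ i, Measurable (h i)) (hmξ : ∀ i, Measurable (ξ i))
    (hξ : ∀ i, μ (ξ i ⁻¹' {1}) = 2⁻¹ ∧ μ (ξ i ⁻¹' {-1}) = 2⁻¹)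
    (hindep : iIndepFun
        (β := fun k : Fin n ⊕ Fin n => Sum.elim (fun _ => Fin m) (fun _ => ℝ) k)
        (m := fun k => Sum.rec (fun _ => (inferInstance : MeasurableSpace (Fin m)))
          (fun _ => (inferInstance : MeasurableSpace ℝ)) k)
        (fun k => Sum.rec (fun i => h i) (fun i => ξ i) k) μ)
    (i k i' k' j1 j2 j3 l : Fin n) (e1 : j1 ≠ l) (e2 : j2 ≠ l) (e3 : j3 ≠ l) :
    ∫ ω, ((if h i ω = h k ω then (1:ℝ) else 0) * (if h i' ω = h k' ω then (1:ℝ) else 0) *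
      (ξ j1 ω * ξ j2 ω * ξ j3 ω)) * ξ l ω ∂μ = 0 := by
  classical
  set T : Finset (Fin n ⊕ Fin n) :=
    {Sum.inl i, Sum.inl k, Sum.inl i', Sum.inl k', Sum.inr j1, Sum.inr j2, Sum.inr j3} with hT
  have hl : Sum.inr l ∉ T := by
    simp only [hT, Finset.mem_insert, Finset.mem_singleton]
    push_neg
    refine ⟨by simp, by simp, by simp, by simp, ?_, ?_, ?_⟩ <;>
      simp [Sum.inr.injEq] <;> [exact fun e => e1 e.symm; exact fun e => e2 e.symm;
        exact fun e => e3 e.symm]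
  let G : ((s : T) → Sum.elim (fun _ => Fin m) (fun _ => ℝ) (s : Fin n ⊕ Fin n)) → ℝ :=
    fun v => ((if (show Fin m from v ⟨Sum.inl i, by simp [hT]⟩)
          = (show Fin m from v ⟨Sum.inl k, by simp [hT]⟩) then (1:ℝ) else 0) *
      (if (show Fin m from v ⟨Sum.inl i', by simp [hT]⟩)
          = (show Fin m from v ⟨Sum.inl k', by simp [hT]⟩) then (1:ℝ) else 0) *
      ((show ℝ from v ⟨Sum.inr j1, by simp [hT]⟩) * (show ℝ from v ⟨Sum.inr j2, by simp [hT]⟩) *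
        (show ℝ from v ⟨Sum.inr j3, by simp [hT]⟩)))
  have hG : Measurable G := by
    have pa : ∀ (s : T), Measurable fun v : ((s : T) →
        Sum.elim (fun _ => Fin m) (fun _ => ℝ) (s : Fin n ⊕ Fin n)) => v s :=
      fun s => measurable_pi_apply s
    refine Measurable.mul (Measurable.mul ?_ ?_) ?_
    · exact Measurable.ite (measurableSet_eq_fun (pa _) (pa _))
        measurable_const measurable_const
    · exact Measurable.ite (measurableSet_eq_fun (pa _) (pa _))
        measurable_const measurable_const
    · exact Measurable.mul (Measurable.mul (pa _) (pa _)) (pa _)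
  have hind := key_indep hmh hmξ hindep T l hl G hG
  have hFeq : (fun ω => G (fun s =>
      Sum.rec (motive := fun k => Ω → Sum.elim (fun _ => Fin m) (fun _ => ℝ) k)
        (fun i => h i) (fun i => ξ i) (s : Fin n ⊕ Fin n) ω))
      = fun ω => ((if h i ω = h k ω then (1:ℝ) else 0) * (if h i' ω = h k' ω then (1:ℝ) else 0) *
        (ξ j1 ω * ξ j2 ω * ξ j3 ω)) := rfl
  rw [hFeq] at hind
  have hFmeas : Measurable (fun ω => ((if h i ω = h k ω then (1:ℝ) else 0) *
      (if h i' ω = h k' ω then (1:ℝ) else 0) * (ξ j1 ω * ξ j2 ω * ξ j3 ω))) := by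
    refine Measurable.mul (Measurable.mul ?_ ?_) (((hmξ j1).mul (hmξ j2)).mul (hmξ j3))
    · exact Measurable.ite (measurableSet_eq_fun (hmh i) (hmh k))
        measurable_const measurable_const
    · exact Measurable.ite (measurableSet_eq_fun (hmh i') (hmh k'))
        measurable_const measurable_const
  have hFbd : ∀ᵐ ω ∂μ, |((if h i ω = h k ω then (1:ℝ) else 0) *
      (if h i' ω = h k' ω then (1:ℝ) else 0) * (ξ j1 ω * ξ j2 ω * ξ j3 ω))| ≤ 1 := by
    filter_upwards [ae_sign' hmξ hξ j1, ae_sign' hmξ hξ j2, ae_sign' hmξ hξ j3] with ω s1 s2 s3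
    have c1 : |ξ j1 ω| = 1 := by rcases s1 with e | e <;> simp [e]
    have c2 : |ξ j2 ω| = 1 := by rcases s2 with e | e <;> simp [e]
    have c3 : |ξ j3 ω| = 1 := by rcases s3 with e | e <;> simp [e]
    have b1 : |(if h i ω = h k ω then (1:ℝ) else 0)| ≤ 1 := by split <;> norm_num
    have b2 : |(if h i' ω = h k' ω then (1:ℝ) else 0)| ≤ 1 := by split <;> norm_num
    rw [abs_mul, abs_mul, abs_mul, abs_mul, c1, c2, c3]
    nlinarith [abs_nonneg (if h i ω = h k ω then (1:ℝ) else 0),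
      abs_nonneg (if h i' ω = h k' ω then (1:ℝ) else 0)]
  have hξbd : ∀ᵐ ω ∂μ, |ξ l ω| ≤ 1 := by
    filter_upwards [ae_sign' hmξ hξ l] with ω s <;> rcases s with e | e <;> simp [e]
  have := hind.integral_mul_eq_mul_integral (int_of_bdd' hFmeas hFbd).aestronglyMeasurable
    (int_of_bdd' (hmξ l) hξbd).aestronglyMeasurable
  calc ∫ ω, ((if h i ω = h k ω then (1:ℝ) else 0) * (if h i' ω = h k' ω then (1:ℝ) else 0) *
      (ξ j1 ω * ξ j2 ω * ξ j3 ω)) * ξ l ω ∂μ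
      = (∫ ω, ((if h i ω = h k ω then (1:ℝ) else 0) * (if h i' ω = h k' ω then (1:ℝ) else 0) *
        (ξ j1 ω * ξ j2 ω * ξ j3 ω)) ∂μ) * ∫ ω, ξ l ω ∂μ := this
    _ = 0 := by rw [xi_mean_zero' hmξ hξ l, mul_zero]

lemma intZ0 (hmh : ∀ i, Measurable (h i)) (hmξ : ∀ i, Measurable (ξ i))
    (hξ : ∀ i, μ (ξ i ⁻¹' {1}) = 2⁻¹ ∧ μ (ξ i ⁻¹' {-1}) = 2⁻¹)
    (hindep : iIndepFun
        (β := fun k : Fin n ⊕ Fin n => Sum.elim (fun _ => Fin m) (fun _ => ℝ) k)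
        (m := fun k => Sum.rec (fun _ => (inferInstance : MeasurableSpace (Fin m)))
          (fun _ => (inferInstance : MeasurableSpace ℝ)) k)
        (fun k => Sum.rec (fun i => h i) (fun i => ξ i) k) μ)
    (i k j l : Fin n) (e1 : j ≠ l) :
    ∫ ω, ((if h i ω = h k ω then (1:ℝ) else 0) * ξ j ω) * ξ l ω ∂μ = 0 := by
  classical
  set T : Finset (Fin n ⊕ Fin n) := {Sum.inl i, Sum.inl k, Sum.inr j} with hT
  have hl : Sum.inr l ∉ T := by
    simp only [hT, Finset.mem_insert, Finset.mem_singleton]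
    push_neg
    refine ⟨by simp, by simp, ?_⟩
    simp [Sum.inr.injEq]
    exact fun e => e1 e.symm
  let G : ((s : T) → Sum.elim (fun _ => Fin m) (fun _ => ℝ) (s : Fin n ⊕ Fin n)) → ℝ :=
    fun v => ((if (show Fin m from v ⟨Sum.inl i, by simp [hT]⟩)
          = (show Fin m from v ⟨Sum.inl k, by simp [hT]⟩) then (1:ℝ) else 0) *
      (show ℝ from v ⟨Sum.inr j, by simp [hT]⟩))
  have hG : Measurable G := by
    have pa : ∀ (s : T), Measurable fun v : ((s : T) →
        Sum.elim (fun _ => Fin m) (fun _ => ℝ) (s : Fin n ⊕ Fin n)) => v s :=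
      fun s => measurable_pi_apply s
    refine Measurable.mul ?_ (pa _)
    exact Measurable.ite (measurableSet_eq_fun (pa _) (pa _))
      measurable_const measurable_const
  have hind := key_indep hmh hmξ hindep T l hl G hG
  have hFeq : (fun ω => G (fun s =>
      Sum.rec (motive := fun k => Ω → Sum.elim (fun _ => Fin m) (fun _ => ℝ) k)
        (fun i => h i) (fun i => ξ i) (s : Fin n ⊕ Fin n) ω))
      = fun ω => ((if h i ω = h k ω then (1:ℝ) else 0) * ξ j ω) := rfl
  rw [hFeq] at hind
  have hFmeas : Measurable (fun ω => ((if h i ω = h k ω then (1:ℝ) else 0) * ξ j ω)) := by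
    refine Measurable.mul ?_ (hmξ j)
    exact Measurable.ite (measurableSet_eq_fun (hmh i) (hmh k))
      measurable_const measurable_const
  have hFbd : ∀ᵐ ω ∂μ, |(if h i ω = h k ω then (1:ℝ) else 0) * ξ j ω| ≤ 1 := by
    filter_upwards [ae_sign' hmξ hξ j] with ω s1
    have c1 : |ξ j ω| = 1 := by rcases s1 with e | e <;> simp [e]
    have b1 : |(if h i ω = h k ω then (1:ℝ) else 0)| ≤ 1 := by split <;> norm_num
    rw [abs_mul, c1, mul_one]; exact b1
  have hξbd : ∀ᵐ ω ∂μ, |ξ l ω| ≤ 1 := by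
    filter_upwards [ae_sign' hmξ hξ l] with ω s
    rcases s with e | e <;> simp [e]
  have := hind.integral_mul_eq_mul_integral (int_of_bdd' hFmeas hFbd).aestronglyMeasurable
    (int_of_bdd' (hmξ l) hξbd).aestronglyMeasurable
  calc ∫ ω, ((if h i ω = h k ω then (1:ℝ) else 0) * ξ j ω) * ξ l ω ∂μ
      = (∫ ω, ((if h i ω = h k ω then (1:ℝ) else 0) * ξ j ω) ∂μ) * ∫ ω, ξ l ω ∂μ := this
    _ = 0 := by rw [xi_mean_zero' hmξ hξ l, mul_zero]

lemma int_ind (hmh : ∀ i, Measurable (h i))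
    (hh : ∀ i (j : Fin m), μ (h i ⁻¹' {j}) = (m : ENNReal)⁻¹)
    (hindep : iIndepFun
        (β := fun k : Fin n ⊕ Fin n => Sum.elim (fun _ => Fin m) (fun _ => ℝ) k)
        (m := fun k => Sum.rec (fun _ => (inferInstance : MeasurableSpace (Fin m)))
          (fun _ => (inferInstance : MeasurableSpace ℝ)) k)
        (fun k => Sum.rec (fun i => h i) (fun i => ξ i) k) μ)
    (hm : 0 < m) (i k : Fin n) (hik : i ≠ k) :
    ∫ ω, (if h i ω = h k ω then (1:ℝ) else 0) ∂μ = (m : ℝ)⁻¹ := by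
  classical
  have hSmeas : MeasurableSet {ω | h i ω = h k ω} :=
    measurableSet_eq_fun (hmh i) (hmh k)
  have hind : IndepFun (h i) (h k) μ := by
    have := hindep.indepFun (i := Sum.inl i) (j := Sum.inl k) (by simp [hik])
    exact this
  have hmeasS : μ {ω | h i ω = h k ω} = (m : ENNReal)⁻¹ := by
    have hdecomp : {ω | h i ω = h k ω} = ⋃ j : Fin m, (h i ⁻¹' {j} ∩ h k ⁻¹' {j}) := by
      ext ω; simp only [Set.mem_setOf_eq, Set.mem_iUnion, Set.mem_inter_iff, Set.mem_preimage,
        Set.mem_singleton_iff]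
      constructor
      · intro he; exact ⟨h k ω, he, rfl⟩
      · rintro ⟨j, e1, e2⟩; rw [e1, e2]
    rw [hdecomp, measure_iUnion]
    · have : ∀ j : Fin m, μ (h i ⁻¹' {j} ∩ h k ⁻¹' {j}) = (m : ENNReal)⁻¹ * (m : ENNReal)⁻¹ := by
        intro j
        rw [hind.measure_inter_preimage_eq_mul _ _ (measurableSet_singleton j)
          (measurableSet_singleton j), hh i j, hh k j]
      rw [tsum_fintype]
      simp only [this, Finset.sum_const, Finset.card_univ, Fintype.card_fin, nsmul_eq_mul]
      rw [← mul_assoc, ENNReal.mul_inv_cancel (by exact_mod_cast hm.ne') (by simp), one_mul]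
    · intro j j' hjj'
      simp only [Function.onFun]
      apply Set.disjoint_left.mpr
      rintro ω ⟨e1, e2⟩ ⟨e3, e4⟩
      simp only [Set.mem_preimage, Set.mem_singleton_iff] at e1 e3
      exact hjj' (e1 ▸ e3 ▸ rfl)
    · intro j; exact ((hmh i) (measurableSet_singleton j)).inter ((hmh k) (measurableSet_singleton j))
  have : (fun ω => (if h i ω = h k ω then (1:ℝ) else 0))
      = fun ω => {ω | h i ω = h k ω}.indicator (fun _ => (1:ℝ)) ω := by
    funext ω; simp [Set.indicator_apply]
  rw [this, integral_indicator_const (1:ℝ) hSmeas, measureReal_def, hmeasS]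
  simp

end Aux

private lemma abs_prod_bound4 (x u y v : ℝ) (hx : |x| ≤ 1) (hy : |y| ≤ 1) :
    |x * u * (y * v)| ≤ |u| * |v| := by
  have e : |x * u * (y * v)| = |x| * |y| * (|u| * |v|) := by
    rw [abs_mul, abs_mul, abs_mul]; ring
  rw [e]
  have h0 := abs_nonneg x
  have h1 := abs_nonneg y
  have h2 := abs_nonneg u
  have h3 := abs_nonneg v
  have hxy : |x| * |y| ≤ 1 := by nlinarith
  nlinarith [mul_nonneg (sub_nonneg.mpr hxy) (mul_nonneg h2 h3)]

private lemma abs_mul_le_one' (x y : ℝ) (hx : |x| ≤ 1) (hy : |y| ≤ 1) : |x * y| ≤ 1 := by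
  rw [abs_mul]
  have h0 := abs_nonneg x
  have h1 := abs_nonneg y
  nlinarith

private lemma abs_mul_le_left' (x u : ℝ) (hx : |x| ≤ 1) : |x * u| ≤ |u| := by
  rw [abs_mul]
  nlinarith [abs_nonneg x, abs_nonneg u, mul_nonneg (sub_nonneg.mpr hx) (abs_nonneg u)]

/-- feature hashing variance bound: With the same hashing setup
(`h : {1,…,n} → {1,…,m}` uniform, `ξ : {1,…,n} → {±1}` Rademacher, all independent, and
`φ̄_j(x) = ∑_{i : h i = j} ξ i * a i`), there is a constant `C` depending only on `a = φ(x)` and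
`b = φ(x')` such that `Var[φ̄(x)ᵀ φ̄(x')] ≤ C/m` for every `m` and every such hashing scheme. -/
theorem feature_hashing_variance_bound
    (n : ℕ) (a b : Fin n → ℝ) :
    ∃ C > 0, ∀ (Ω : Type u) (_ : MeasurableSpace Ω) (μ : Measure Ω)
      (_ : IsProbabilityMeasure μ) (m : ℕ) (_ : 0 < m)
      (h : Fin n → Ω → Fin m) (ξ : Fin n → Ω → ℝ),
      (∀ i, Measurable (h i)) → (∀ i, Measurable (ξ i)) →
      (∀ i (j : Fin m), μ (h i ⁻¹' {j}) = (m : ENNReal)⁻¹) →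
      (∀ i, μ (ξ i ⁻¹' {1}) = 2⁻¹ ∧ μ (ξ i ⁻¹' {-1}) = 2⁻¹) →
      iIndepFun
        (β := fun k : Fin n ⊕ Fin n => Sum.elim (fun _ => Fin m) (fun _ => ℝ) k)
        (m := fun k => Sum.rec (fun _ => (inferInstance : MeasurableSpace (Fin m)))
          (fun _ => (inferInstance : MeasurableSpace ℝ)) k)
        (fun k => Sum.rec (fun i => h i) (fun i => ξ i) k) μ →
      variance (fun ω => ∑ j : Fin m,
          (∑ i, if h i ω = j then ξ i ω * a i else 0) *
            (∑ i, if h i ω = j then ξ i ω * b i else 0)) μ ≤ C / m := by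
  classical
  set c : Fin n × Fin n → ℝ := fun p => a p.1 * b p.2 with hc
  set D : Finset (Fin n × Fin n) := Finset.offDiag Finset.univ with hD
  set S : ℝ := ∑ p ∈ D, (c p ^ 2 + c p * c p.swap) with hSdef
  have hswapmem : ∀ p : Fin n × Fin n, p ∈ D → p.swap ∈ D := by
    intro p hp
    simp only [hD, Finset.mem_offDiag] at hp ⊢
    exact ⟨Finset.mem_univ _, Finset.mem_univ _, fun e => hp.2.2 e.symm⟩
  have hsum_swap : ∀ g : Fin n × Fin n → ℝ, ∑ p ∈ D, g p.swap = ∑ p ∈ D, g p := by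
    intro g
    refine Finset.sum_equiv (Equiv.prodComm (Fin n) (Fin n)) ?_ ?_
    · intro p
      simp only [hD, Finset.mem_offDiag, Equiv.prodComm_apply, Prod.fst_swap, Prod.snd_swap]
      exact ⟨fun hp => ⟨Finset.mem_univ _, Finset.mem_univ _, fun e => hp.2.2 e.symm⟩,
        fun hp => ⟨Finset.mem_univ _, Finset.mem_univ _, fun e => hp.2.2 e.symm⟩⟩
    · intro p _; rfl
  have hS0 : 0 ≤ S := by
    have h2 : S + S = ∑ p ∈ D, (c p + c p.swap) ^ 2 := by
      have e1 : ∑ p ∈ D, (c p.swap ^ 2 + c p.swap * c p) = S := by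
        rw [hSdef]
        exact hsum_swap (fun p => c p ^ 2 + c p * c p.swap)
      calc S + S = ∑ p ∈ D, (c p ^ 2 + c p * c p.swap)
            + ∑ p ∈ D, (c p.swap ^ 2 + c p.swap * c p) := by rw [hSdef, e1]
        _ = ∑ p ∈ D, ((c p ^ 2 + c p * c p.swap) + (c p.swap ^ 2 + c p.swap * c p)) := by
            rw [← Finset.sum_add_distrib]
        _ = ∑ p ∈ D, (c p + c p.swap) ^ 2 := by
            exact Finset.sum_congr rfl fun p _ => by ring
    have h3 : 0 ≤ ∑ p ∈ D, (c p + c p.swap) ^ 2 :=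
      Finset.sum_nonneg fun p _ => sq_nonneg _
    linarith
  refine ⟨S + 1, by linarith, ?_⟩
  intro Ω mΩ μ hprob m hm h ξ hmh hmξ hh hξ hindep
  haveI := hprob
  -- the summand functions
  set W : Fin n × Fin n → Ω → ℝ :=
    fun p ω => (if h p.1 ω = h p.2 ω then (1:ℝ) else 0) * (ξ p.1 ω * ξ p.2 ω) with hW
  have hWmeas : ∀ p : Fin n × Fin n, Measurable (W p) := fun p =>
    (Measurable.ite (measurableSet_eq_fun (hmh p.1) (hmh p.2))
      measurable_const measurable_const).mul ((hmξ p.1).mul (hmξ p.2))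
  have hsigns : ∀ᵐ ω ∂μ, ∀ i, ξ i ω = 1 ∨ ξ i ω = -1 :=
    (ae_all_iff).mpr (ae_sign' hmξ hξ)
  have hWbd : ∀ᵐ ω ∂μ, ∀ p : Fin n × Fin n, |W p ω| ≤ 1 := by
    filter_upwards [hsigns] with ω hs
    intro p
    have c1 : |ξ p.1 ω| = 1 := by rcases hs p.1 with e | e <;> simp [e]
    have c2 : |ξ p.2 ω| = 1 := by rcases hs p.2 with e | e <;> simp [e]
    have b1 : |(if h p.1 ω = h p.2 ω then (1:ℝ) else 0)| ≤ 1 := by split <;> norm_num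
    calc |W p ω| = |(if h p.1 ω = h p.2 ω then (1:ℝ) else 0)| * (|ξ p.1 ω| * |ξ p.2 ω|) := by
          simp only [hW]; rw [abs_mul, abs_mul]
      _ ≤ 1 := by rw [c1, c2]; simpa using b1
  -- rewrite the random variable
  have hXeq : (fun ω => ∑ j : Fin m,
      (∑ i, if h i ω = j then ξ i ω * a i else 0) *
        (∑ i, if h i ω = j then ξ i ω * b i else 0))
      = fun ω => ∑ p : Fin n × Fin n, W p ω * c p := by
    funext ω
    calc ∑ j : Fin m, (∑ i, if h i ω = j then ξ i ω * a i else 0) *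
          (∑ i, if h i ω = j then ξ i ω * b i else 0)
        = ∑ j : Fin m, ∑ i : Fin n, ∑ k : Fin n,
            (if h i ω = j then ξ i ω * a i else 0) * (if h k ω = j then ξ k ω * b k else 0) := by
          exact Finset.sum_congr rfl fun j _ => Finset.sum_mul_sum _ _ _ _
      _ = ∑ i : Fin n, ∑ k : Fin n, ∑ j : Fin m,
            (if h i ω = j then ξ i ω * a i else 0) * (if h k ω = j then ξ k ω * b k else 0) := by
          rw [Finset.sum_comm]
          exact Finset.sum_congr rfl fun i _ => Finset.sum_comm
      _ = ∑ i : Fin n, ∑ k : Fin n, W (i, k) ω * c (i, k) := by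
          refine Finset.sum_congr rfl fun i _ => Finset.sum_congr rfl fun k _ => ?_
          have step : ∀ j : Fin m, (if h i ω = j then ξ i ω * a i else 0) *
              (if h k ω = j then ξ k ω * b k else 0)
              = if h i ω = j then (if h k ω = j then (ξ i ω * a i) * (ξ k ω * b k) else 0)
                else 0 := by
            intro j; split_ifs <;> ring
          rw [Finset.sum_congr rfl fun j _ => step j, Finset.sum_ite_eq]
          simp only [hW, hc, Finset.mem_univ, if_true]
          by_cases e : h i ω = h k ω <;> simp [e, eq_comm] <;> ring
      _ = ∑ p : Fin n × Fin n, W p ω * c p := by rw [Fintype.sum_prod_type]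
  rw [hXeq]
  set X : Ω → ℝ := fun ω => ∑ p : Fin n × Fin n, W p ω * c p with hX
  have hXmeas : Measurable X := by
    apply Finset.measurable_sum
    intro p _
    exact (hWmeas p).mul_const _
  have hXbd : ∀ᵐ ω ∂μ, ‖X ω‖ ≤ ∑ p : Fin n × Fin n, |c p| := by
    filter_upwards [hWbd] with ω hw
    simp only [hX]
    calc ‖∑ p : Fin n × Fin n, W p ω * c p‖ ≤ ∑ p : Fin n × Fin n, |W p ω * c p| := by
          simpa using Finset.abs_sum_le_sum_abs (fun p => W p ω * c p) Finset.univ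
      _ ≤ ∑ p : Fin n × Fin n, |c p| := by
          exact Finset.sum_le_sum fun p _ => abs_mul_le_left' _ _ (hw p)
  have hXmem : MemLp X 2 μ := MemLp.of_bound hXmeas.aestronglyMeasurable _ hXbd
  rw [variance_eq_sub hXmem]
  -- decomposition
  set d : ℝ := ∑ i : Fin n, a i * b i with hd
  set Y : Ω → ℝ := fun ω => ∑ p ∈ D, W p ω * c p with hY
  have hYmeas : Measurable Y :=
    Finset.measurable_sum _ fun p _ => (hWmeas p).mul_const _
  have hdecomp : ∀ᵐ ω ∂μ, X ω = d + Y ω := by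
    filter_upwards [hsigns] with ω hs
    simp only [hX, hY, hd]
    have huniv : (Finset.univ : Finset (Fin n × Fin n)) = Finset.univ ×ˢ Finset.univ := by
      rw [Finset.univ_product_univ]
    rw [huniv, ← Finset.diag_union_offDiag (Finset.univ : Finset (Fin n)),
      Finset.sum_union (Finset.disjoint_diag_offDiag _), ← hD]
    congr 1
    rw [Finset.sum_diag]
    refine Finset.sum_congr rfl fun i _ => ?_
    have : ξ i ω * ξ i ω = 1 := by rcases hs i with e | e <;> rw [e] <;> norm_num
    simp [hW, hc, this]
  -- integrability of pieces
  have hWint : ∀ p q : Fin n × Fin n, Integrable (fun ω => (W p ω * c p) * (W q ω * c q)) μ := by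
    intro p q
    refine int_of_bdd' (((hWmeas p).mul_const _).mul ((hWmeas q).mul_const _)) (C := |c p| * |c q|) ?_
    filter_upwards [hWbd] with ω hw
    exact abs_prod_bound4 _ _ _ _ (hw p) (hw q)
  have hWint1 : ∀ p : Fin n × Fin n, Integrable (fun ω => W p ω * c p) μ := by
    intro p
    refine int_of_bdd' ((hWmeas p).mul_const _) (C := |c p|) ?_
    filter_upwards [hWbd] with ω hw
    exact abs_mul_le_left' _ _ (hw p)
  have hYint : Integrable Y μ := by
    simp only [hY]; exact integrable_finset_sum _ fun p _ => hWint1 p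
  -- mean of W p vanishes off-diagonal
  have hWzero : ∀ p ∈ D, ∫ ω, W p ω ∂μ = 0 := by
    intro p hp
    have hne : p.1 ≠ p.2 := by
      rw [hD] at hp; exact (Finset.mem_offDiag.mp hp).2.2
    have : (fun ω => W p ω)
        = fun ω => ((if h p.1 ω = h p.2 ω then (1:ℝ) else 0) * ξ p.1 ω) * ξ p.2 ω := by
      funext ω; simp only [hW]; ring
    rw [this]
    exact intZ0 hmh hmξ hξ hindep p.1 p.2 p.1 p.2 hne
  have hYzero : ∫ ω, Y ω ∂μ = 0 := by
    rw [hY, integral_finset_sum _ fun p _ => hWint1 p]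
    refine Finset.sum_eq_zero fun p hp => ?_
    rw [integral_mul_const, hWzero p hp, zero_mul]
  -- mean of X
  have hEX : ∫ ω, X ω ∂μ = d := by
    have eEX : ∫ ω, (d + Y ω) ∂μ = (∫ _ω, d ∂μ) + ∫ ω, Y ω ∂μ :=
      integral_add (integrable_const _) hYint
    rw [integral_congr_ae hdecomp, eEX, hYzero, add_zero, integral_const]
    simp
  -- the w-product integrals
  have hWW : ∀ p ∈ D, ∀ q ∈ D, ∫ ω, (W p ω * c p) * (W q ω * c q) ∂μ
      = (if q = p then c p ^ 2 * (m:ℝ)⁻¹ else 0)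
        + (if q = p.swap then c p * c p.swap * (m:ℝ)⁻¹ else 0) := by
    intro p hp q hq
    have hne : p.1 ≠ p.2 := by rw [hD] at hp; exact (Finset.mem_offDiag.mp hp).2.2
    have hne' : q.1 ≠ q.2 := by rw [hD] at hq; exact (Finset.mem_offDiag.mp hq).2.2
    have hWWint : Integrable (fun ω => W p ω * W q ω) μ := by
      refine int_of_bdd' ((hWmeas p).mul (hWmeas q)) (C := 1) ?_
      filter_upwards [hWbd] with ω hw
      exact abs_mul_le_one' _ _ (hw p) (hw q)
    have hpull : ∫ ω, (W p ω * c p) * (W q ω * c q) ∂μ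
        = (∫ ω, W p ω * W q ω ∂μ) * (c p * c q) := by
      rw [show (fun ω => (W p ω * c p) * (W q ω * c q))
          = fun ω => (W p ω * W q ω) * (c p * c q) from funext fun ω => by ring]
      rw [integral_mul_const]
    have hpswap : p ≠ p.swap := by
      intro e
      exact hne (congrArg Prod.fst e)
    by_cases hqp : q = p
    · subst hqp
      have hae : (fun ω => W q ω * W q ω)
          =ᵐ[μ] fun ω => (if h q.1 ω = h q.2 ω then (1:ℝ) else 0) := by
        filter_upwards [hsigns] with ω hs
        have c1 : ξ q.1 ω * ξ q.1 ω = 1 := by rcases hs q.1 with e | e <;> rw [e] <;> norm_num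
        have c2 : ξ q.2 ω * ξ q.2 ω = 1 := by rcases hs q.2 with e | e <;> rw [e] <;> norm_num
        simp only [hW]
        by_cases e : h q.1 ω = h q.2 ω <;> simp [e] <;> nlinarith [c1, c2]
      rw [hpull, integral_congr_ae hae, int_ind hmh hh hindep hm q.1 q.2 hne]
      rw [if_pos rfl, if_neg hpswap]
      ring
    · by_cases hqsw : q = p.swap
      · subst hqsw
        have hae : (fun ω => W p ω * W p.swap ω)
            =ᵐ[μ] fun ω => (if h p.1 ω = h p.2 ω then (1:ℝ) else 0) := by
          filter_upwards [hsigns] with ω hs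
          have c1 : ξ p.1 ω * ξ p.1 ω = 1 := by rcases hs p.1 with e | e <;> rw [e] <;> norm_num
          have c2 : ξ p.2 ω * ξ p.2 ω = 1 := by rcases hs p.2 with e | e <;> rw [e] <;> norm_num
          simp only [hW, Prod.fst_swap, Prod.snd_swap]
          by_cases e : h p.1 ω = h p.2 ω
          · rw [if_pos e, if_pos e.symm, one_mul, one_mul]
            have hx : (ξ p.1 ω * ξ p.2 ω) * (ξ p.2 ω * ξ p.1 ω)
                = (ξ p.1 ω * ξ p.1 ω) * (ξ p.2 ω * ξ p.2 ω) := by ring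
            rw [hx, c1, c2]; norm_num
          · have e' : ¬ (h p.2 ω = h p.1 ω) := fun x => e x.symm
            rw [if_neg e, if_neg e']
            ring
        rw [hpull, integral_congr_ae hae, int_ind hmh hh hindep hm p.1 p.2 hne]
        rw [if_neg (fun e => hpswap e.symm), if_pos rfl]
        ring
      · -- cross terms vanish
        rw [hpull, if_neg hqp, if_neg hqsw, add_zero]
        have hzero : ∫ ω, W p ω * W q ω ∂μ = 0 := by
          by_cases e1 : q.1 = p.1
          · have g2 : q.1 ≠ p.2 := by rw [e1]; exact hne
            have g3 : q.2 ≠ p.2 := fun e => hqp (Prod.ext e1 e)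
            have heq : (fun ω => W p ω * W q ω) = fun ω =>
                ((if h p.1 ω = h p.2 ω then (1:ℝ) else 0) *
                  (if h q.1 ω = h q.2 ω then (1:ℝ) else 0) *
                  (ξ p.1 ω * ξ q.1 ω * ξ q.2 ω)) * ξ p.2 ω := by
              funext ω; simp only [hW]; ring
            rw [heq]
            exact intZ hmh hmξ hξ hindep p.1 p.2 q.1 q.2 p.1 q.1 q.2 p.2 hne g2 g3
          · by_cases e2 : q.2 = p.1
            · have g2 : q.1 ≠ p.2 := by
                intro e
                exact hqsw (Prod.ext e e2)
              have g3 : q.2 ≠ p.2 := by rw [e2]; exact hne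
              have heq : (fun ω => W p ω * W q ω) = fun ω =>
                  ((if h p.1 ω = h p.2 ω then (1:ℝ) else 0) *
                    (if h q.1 ω = h q.2 ω then (1:ℝ) else 0) *
                    (ξ p.1 ω * ξ q.1 ω * ξ q.2 ω)) * ξ p.2 ω := by
                funext ω; simp only [hW]; ring
              rw [heq]
              exact intZ hmh hmξ hξ hindep p.1 p.2 q.1 q.2 p.1 q.1 q.2 p.2 hne g2 g3
            · have g1 : p.2 ≠ p.1 := fun e => hne e.symm
              have heq : (fun ω => W p ω * W q ω) = fun ω =>
                  ((if h p.1 ω = h p.2 ω then (1:ℝ) else 0) *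
                    (if h q.1 ω = h q.2 ω then (1:ℝ) else 0) *
                    (ξ p.2 ω * ξ q.1 ω * ξ q.2 ω)) * ξ p.1 ω := by
                funext ω; simp only [hW]; ring
              rw [heq]
              exact intZ hmh hmξ hξ hindep p.1 p.2 q.1 q.2 p.2 q.1 q.2 p.1 g1 e1 e2
        rw [hzero, zero_mul]
  -- bound on Y
  set bY : ℝ := ∑ p ∈ D, |c p| with hbY
  have hbY0 : 0 ≤ bY := Finset.sum_nonneg fun p _ => abs_nonneg _
  have hYbd : ∀ᵐ ω ∂μ, |Y ω| ≤ bY := by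
    filter_upwards [hWbd] with ω hw
    simp only [hY, hbY]
    calc |∑ p ∈ D, W p ω * c p| ≤ ∑ p ∈ D, |W p ω * c p| :=
        Finset.abs_sum_le_sum_abs _ _
      _ ≤ ∑ p ∈ D, |c p| := by
        exact Finset.sum_le_sum fun p _ => abs_mul_le_left' _ _ (hw p)
  have hY2int : Integrable (fun ω => Y ω ^ 2) μ := by
    refine int_of_bdd' (hYmeas.pow_const 2) (C := bY ^ 2) ?_
    filter_upwards [hYbd] with ω hw
    rw [abs_pow]
    exact pow_le_pow_left₀ (abs_nonneg _) hw 2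
  have hY2 : ∫ ω, Y ω ^ 2 ∂μ = S * (m:ℝ)⁻¹ := by
    have hexpand : (fun ω => Y ω ^ 2)
        = fun ω => ∑ p ∈ D, ∑ q ∈ D, (W p ω * c p) * (W q ω * c q) := by
      funext ω
      simp only [hY]
      rw [pow_two, Finset.sum_mul_sum]
    rw [hexpand, integral_finset_sum _ fun p _ => integrable_finset_sum _ fun q _ => hWint p q]
    calc ∑ p ∈ D, ∫ ω, ∑ q ∈ D, (W p ω * c p) * (W q ω * c q) ∂μ
        = ∑ p ∈ D, ∑ q ∈ D, ∫ ω, (W p ω * c p) * (W q ω * c q) ∂μ :=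
          Finset.sum_congr rfl fun p _ => integral_finset_sum _ fun q _ => hWint p q
      _ = ∑ p ∈ D, (c p ^ 2 * (m:ℝ)⁻¹ + c p * c p.swap * (m:ℝ)⁻¹) := by
          refine Finset.sum_congr rfl fun p hp => ?_
          rw [Finset.sum_congr rfl fun q hq => hWW p hp q hq, Finset.sum_add_distrib,
            Finset.sum_ite_eq' D p fun _ => c p ^ 2 * (m:ℝ)⁻¹,
            Finset.sum_ite_eq' D p.swap fun _ => c p * c p.swap * (m:ℝ)⁻¹,
            if_pos hp, if_pos (hswapmem p hp)]
      _ = S * (m:ℝ)⁻¹ := by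
          rw [hSdef, Finset.sum_mul]
          exact Finset.sum_congr rfl fun p _ => by ring
  have hX2 : ∫ ω, X ω ^ 2 ∂μ = d ^ 2 + ∫ ω, Y ω ^ 2 ∂μ := by
    have hae : (fun ω => X ω ^ 2) =ᵐ[μ] fun ω => d ^ 2 + (2 * d * Y ω + Y ω ^ 2) := by
      filter_upwards [hdecomp] with ω e
      rw [e]; ring
    have h1 : Integrable (fun ω => 2 * d * Y ω + Y ω ^ 2) μ := (hYint.const_mul _).add hY2int
    have e1 : ∫ ω, (d ^ 2 + (2 * d * Y ω + Y ω ^ 2)) ∂μ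
        = (∫ _ω, (d ^ 2 : ℝ) ∂μ) + ∫ ω, (2 * d * Y ω + Y ω ^ 2) ∂μ :=
      integral_add (integrable_const _) h1
    have e2 : ∫ ω, (2 * d * Y ω + Y ω ^ 2) ∂μ
        = (∫ ω, 2 * d * Y ω ∂μ) + ∫ ω, Y ω ^ 2 ∂μ :=
      integral_add (hYint.const_mul _) hY2int
    have e3 : ∫ ω, 2 * d * Y ω ∂μ = 2 * d * ∫ ω, Y ω ∂μ := integral_const_mul _ _
    rw [integral_congr_ae hae, e1, e2, e3, hYzero, mul_zero, zero_add, integral_const]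
    simp
  have hfinal : μ[X ^ 2] - μ[X] ^ 2 ≤ (S + 1) / m := by
    have e1 : μ[X ^ 2] = ∫ ω, X ω ^ 2 ∂μ := rfl
    have e2 : μ[X] = ∫ ω, X ω ∂μ := rfl
    rw [e1, e2, hEX, hX2, hY2]
    have : d ^ 2 + S * (m:ℝ)⁻¹ - d ^ 2 = S * (m:ℝ)⁻¹ := by ring
    rw [this, div_eq_mul_inv]
    exact mul_le_mul_of_nonneg_right (by linarith) (inv_nonneg.mpr (by positivity))
  exact hfinal
end
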